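/- In the superstar Plackett–Luce model, for any ranks i < j, the ratio P[σ^i]/P[σ^j] = ∏_{k=i}^{j−1} (1 + (e^{(v₁−v₂)/β} − 1)/(n − k)). In particular P[σ^i] ≥ P[σ^j] for i < j, and each such ratio is strictly increasing as β decreases (accuracy increases) when v₁ > v₂. -/

import Mathlib

open Finset

/-- Closed-form probability that the high-value item is ranked at (1-indexed)
position `i` in the superstar Plackett–Luce model with `n` items, values
`v₁ > v₂`, and Gumbel noise scale `β`. -/
noncomputable def superstarP (v₁ v₂ β : ℝ) (n i : ℕ) : ℝ :=
  Real.exp ((v₁ - v₂) / β) / (Real.exp ((v₁ - v₂) / β) + (n - 1)) *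
    ∏ k ∈ Finset.range (i - 1),
      1 / (1 + (Real.exp ((v₁ - v₂) / β) - 1) / ((n : ℝ) - (k + 1)))

lemma aux_g_one_le (n : ℕ) (E : ℝ) (hE : 1 < E) (k : ℕ) (hk : k ≤ n) :
    (1 : ℝ) ≤ 1 + (E - 1) / ((n : ℝ) - k) := by
  have h0 : (0:ℝ) ≤ (n : ℝ) - k := by
    have : (k:ℝ) ≤ n := by exact_mod_cast hk
    linarith
  nlinarith [div_nonneg (by linarith : (0:ℝ) ≤ E - 1) h0]

lemma aux_ratio (n i j : ℕ) (E : ℝ) (hE : 1 < E)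
    (hi : 1 ≤ i) (hij : i < j) (hj : j ≤ n) :
    (E / (E + ((n:ℝ) - 1)) * ∏ k ∈ Finset.range (i - 1),
        1 / (1 + (E - 1) / ((n : ℝ) - (k + 1)))) /
    (E / (E + ((n:ℝ) - 1)) * ∏ k ∈ Finset.range (j - 1),
        1 / (1 + (E - 1) / ((n : ℝ) - (k + 1)))) =
    ∏ k ∈ Finset.Ico i j, (1 + (E - 1) / ((n : ℝ) - k)) := by
  set g : ℕ → ℝ := fun k => 1 + (E - 1) / ((n : ℝ) - (k + 1)) with hg
  have hgpos : ∀ k, k + 1 ≤ n → 0 < g k := by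
    intro k hk
    have := aux_g_one_le n E hE (k+1) hk
    push_cast at this ⊢
    simp only [hg]
    linarith
  have hA : 0 < E / (E + ((n:ℝ) - 1)) := by
    have hn : (1:ℝ) ≤ (n:ℝ) := by exact_mod_cast (by omega : 1 ≤ n)
    apply div_pos (by linarith) (by linarith)
  have hsplit : (∏ k ∈ Finset.range (j - 1), (1 / g k)) =
      (∏ k ∈ Finset.range (i - 1), (1 / g k)) *
      ∏ k ∈ Finset.Ico (i - 1) (j - 1), (1 / g k) := by
    rw [Finset.range_eq_Ico, Finset.range_eq_Ico]
    exact (Finset.prod_Ico_consecutive (fun k => 1 / g k) (by omega : 0 ≤ i - 1) (by omega : i - 1 ≤ j - 1)).symm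
  have hQpos : ∀ m, m ≤ n → 0 < ∏ k ∈ Finset.range m, (1 / g k) := by
    intro m hm
    apply Finset.prod_pos
    intro k hk
    have := hgpos k (by simp at hk; omega)
    positivity
  have hRpos : 0 < ∏ k ∈ Finset.Ico (i-1) (j-1), (1 / g k) := by
    apply Finset.prod_pos
    intro k hk
    simp only [Finset.mem_Ico] at hk
    have := hgpos k (by omega)
    positivity
  rw [hsplit]
  have h1 : 0 < ∏ k ∈ Finset.range (i-1), (1 / g k) := hQpos _ (by omega)
  rw [show (E / (E + ((n:ℝ) - 1)) * ∏ k ∈ Finset.range (i - 1), (1 / g k)) /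
      (E / (E + ((n:ℝ) - 1)) * ((∏ k ∈ Finset.range (i - 1), (1 / g k)) *
        ∏ k ∈ Finset.Ico (i - 1) (j - 1), (1 / g k))) =
      1 / ∏ k ∈ Finset.Ico (i - 1) (j - 1), (1 / g k) from by
    rw [← mul_assoc, div_mul_eq_div_div, div_self (ne_of_gt (mul_pos hA h1))]]
  have : (∏ k ∈ Finset.Ico (i - 1) (j - 1), (1 / g k)) =
      (∏ k ∈ Finset.Ico (i - 1) (j - 1), g k)⁻¹ := by
    rw [← Finset.prod_inv_distrib]
    simp [one_div]
  rw [this, one_div, inv_inv]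
  rw [Finset.prod_Ico_eq_prod_range, Finset.prod_Ico_eq_prod_range]
  rw [show j - 1 - (i - 1) = j - i from by omega]
  apply Finset.prod_congr rfl
  intro k hk
  simp only [hg]
  congr 2
  have : ((i - 1 + k : ℕ) : ℝ) + 1 = ((i + k : ℕ) : ℝ) := by
    exact_mod_cast congrArg (Nat.cast (R := ℝ)) (by omega : (i - 1 + k) + 1 = i + k)
  rw [this]

/-- In the superstar Plackett–Luce model, for ranks `i < j`,
`P[σ^i]/P[σ^j] = ∏_{k=i}^{j−1} (1 + (e^{(v₁−v₂)/β} − 1)/(n − k))`; in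
particular `P[σ^i] ≥ P[σ^j]`, and the ratio is strictly increasing as `β`
decreases (accuracy increases) when `v₁ > v₂`. -/
theorem stmt3
    (n i j : ℕ) (v₁ v₂ β β' : ℝ)
    (hβ : 0 < β) (hβ' : 0 < β') (hβ'β : β' < β) (hv : v₂ < v₁)
    (hi : 1 ≤ i) (hij : i < j) (hj : j ≤ n) :
    superstarP v₁ v₂ β n i / superstarP v₁ v₂ β n j =
        ∏ k ∈ Finset.Ico i j,
          (1 + (Real.exp ((v₁ - v₂) / β) - 1) / ((n : ℝ) - k)) ∧
      superstarP v₁ v₂ β n j ≤ superstarP v₁ v₂ β n i ∧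
      superstarP v₁ v₂ β n i / superstarP v₁ v₂ β n j <
        superstarP v₁ v₂ β' n i / superstarP v₁ v₂ β' n j := by
  have hv' : 0 < v₁ - v₂ := by linarith
  have hE : 1 < Real.exp ((v₁ - v₂) / β) := by
    have h := Real.exp_lt_exp.mpr (show (0:ℝ) < (v₁ - v₂) / β by positivity)
    simpa using h
  have hE' : 1 < Real.exp ((v₁ - v₂) / β') := by
    have h := Real.exp_lt_exp.mpr (show (0:ℝ) < (v₁ - v₂) / β' by positivity)
    simpa using h
  have hEE' : Real.exp ((v₁ - v₂) / β) < Real.exp ((v₁ - v₂) / β') := by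
    apply Real.exp_lt_exp.mpr
    apply div_lt_div_of_pos_left hv' hβ' hβ'β
  have hr : superstarP v₁ v₂ β n i / superstarP v₁ v₂ β n j =
      ∏ k ∈ Finset.Ico i j, (1 + (Real.exp ((v₁ - v₂) / β) - 1) / ((n : ℝ) - k)) :=
    aux_ratio n i j _ hE hi hij hj
  have hr' : superstarP v₁ v₂ β' n i / superstarP v₁ v₂ β' n j =
      ∏ k ∈ Finset.Ico i j, (1 + (Real.exp ((v₁ - v₂) / β') - 1) / ((n : ℝ) - k)) :=
    aux_ratio n i j _ hE' hi hij hj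
  have hPpos : ∀ (b : ℝ), 0 < b → ∀ m, m ≤ n → 0 < superstarP v₁ v₂ b n m := by
    intro b hb m hm
    have hEb : 1 < Real.exp ((v₁ - v₂) / b) := by
      have h := Real.exp_lt_exp.mpr (show (0:ℝ) < (v₁ - v₂) / b by positivity)
      simpa using h
    unfold superstarP
    have hn : (1:ℝ) ≤ (n:ℝ) := by exact_mod_cast (by omega : 1 ≤ n)
    apply mul_pos (div_pos (by linarith) (by linarith))
    apply Finset.prod_pos
    intro k hk
    simp only [Finset.mem_range] at hk
    have hk' : k + 1 ≤ n := by omega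
    have := aux_g_one_le n _ hEb (k+1) hk'
    push_cast at this
    positivity
  refine ⟨hr, ?_, ?_⟩
  · have hPj := hPpos β hβ j hj
    rw [← one_le_div hPj]
    rw [hr]
    calc (1:ℝ) = ∏ k ∈ Finset.Ico i j, 1 := by simp
      _ ≤ _ := by
        apply Finset.prod_le_prod (by intros; norm_num)
        intro k hk
        simp only [Finset.mem_Ico] at hk
        exact aux_g_one_le n _ hE k (by omega)
  · rw [hr, hr']
    apply Finset.prod_lt_prod_of_nonempty
    · intro k hk
      simp only [Finset.mem_Ico] at hk
      have := aux_g_one_le n _ hE k (by omega)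
      linarith
    · intro k hk
      simp only [Finset.mem_Ico] at hk
      have hd : (0:ℝ) < (n:ℝ) - k := by
        have : (k:ℝ) + 1 ≤ n := by exact_mod_cast (by omega : k + 1 ≤ n)
        linarith
      exact (add_lt_add_iff_left 1).mpr ((div_lt_div_iff_of_pos_right hd).mpr (by linarith))
    · exact Finset.nonempty_Ico.mpr hij
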